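/- Let α > 0 and let z be a real number with 0 < z < 1. Write g(z) = 1/2 + (1/2)(1-z)^{1/2} and p(z) = -(α+1/2)(1-z) + α(1-z)^{1/2} + 1/2. Then the Gauss hypergeometric series satisfies ₂F₁(α, α+1/2, 2α+2; z) = Σ_{n=0}^∞ (α)_n (α+1/2)_n / ((2α+2)_n · n!) · z^n = (2α+1) g(z)^{-2α} p(z) / ((α+1)(α+1/2) z). -/

import Mathlib

set_option maxHeartbeats 2000000
open Real Filter Set
/-- Pochhammer symbol (rising factorial) `(x)_n = x(x+1)⋯(x+n-1)`. -/
noncomputable def poch (x : ℝ) (n : ℕ) : ℝ := Polynomial.eval x (ascPochhammer ℝ n)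

lemma poch_zero (x : ℝ) : poch x 0 = 1 := by simp [poch]

lemma poch_succ (x : ℝ) (n : ℕ) : poch x (n+1) = poch x n * (x + n) := by
  simp [poch, ascPochhammer_succ_right]

lemma poch_pos {x : ℝ} (hx : 0 < x) (n : ℕ) : 0 < poch x n := by
  induction n with
  | zero => simp [poch_zero]
  | succ n ih => rw [poch_succ]; have : (0:ℝ) ≤ n := Nat.cast_nonneg n; nlinarith

/-- coefficients of the hypergeometric series -/
noncomputable def hgc (α : ℝ) (n : ℕ) : ℝ :=
  poch α n * poch (α + 1/2) n / (poch (2*α + 2) n * n.factorial)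

lemma hgc_zero (α : ℝ) : hgc α 0 = 1 := by simp [hgc, poch_zero]

lemma hgc_pos {α : ℝ} (hα : 0 < α) (n : ℕ) : 0 < hgc α n := by
  have h1 := poch_pos hα n
  have h2 := poch_pos (by linarith : (0:ℝ) < α + 1/2) n
  have h3 := poch_pos (by linarith : (0:ℝ) < 2*α + 2) n
  have h4 : (0:ℝ) < n.factorial := by positivity
  exact div_pos (by positivity) (by positivity)

lemma hgc_rec {α : ℝ} (hα : 0 < α) (n : ℕ) :
    ((n:ℝ)+1) * ((n:ℝ) + (2*α+2)) * hgc α (n+1)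
      = ((n:ℝ) + α) * ((n:ℝ) + (α + 1/2)) * hgc α n := by
  have h3 : (0:ℝ) < poch (2*α+2) n := poch_pos (by linarith) n
  have h4 : (0:ℝ) < (n.factorial : ℝ) := by positivity
  rw [hgc, hgc, poch_succ, poch_succ, poch_succ, Nat.factorial_succ]
  push_cast
  field_simp
  ring

/-- geometric-type summability of coefficients -/
def GeomSum (a : ℕ → ℝ) : Prop := ∀ r : ℝ, 0 ≤ r → r < 1 → Summable (fun n => |a n| * r ^ n)

lemma aux_np1_pow_le {q : ℝ} (hq0 : 0 ≤ q) (hq1 : q < 1) (n : ℕ) :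
    ((n:ℝ)+1) * q ^ n ≤ 1 / (1 - q) := by
  have h1 : ((n:ℝ)+1) * q ^ n = ∑ _k ∈ Finset.range (n+1), q ^ n := by
    rw [Finset.sum_const, Finset.card_range, nsmul_eq_mul]; push_cast; ring
  have h2 : ∑ _k ∈ Finset.range (n+1), q ^ n ≤ ∑ k ∈ Finset.range (n+1), q ^ k := by
    apply Finset.sum_le_sum
    intro k hk
    exact pow_le_pow_of_le_one hq0 hq1.le (Nat.lt_succ_iff.mp (Finset.mem_range.mp hk))
  have h4 : (0:ℝ) < 1 - q := by linarith
  have h3 : ∑ k ∈ Finset.range (n+1), q ^ k ≤ 1 / (1-q) := by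
    have hgs : ∑ k ∈ Finset.range (n+1), q ^ k = (1 - q ^ (n+1))/(1-q) := by
      rw [geom_sum_eq (by linarith : q ≠ 1)]
      rw [div_eq_div_iff (by linarith) (by linarith)]
      ring
    rw [hgs, div_le_div_iff₀ h4 h4]
    have : 0 ≤ q ^ (n+1) := by positivity
    nlinarith
  linarith

lemma GeomSum.shift {a : ℕ → ℝ} (ha : GeomSum a) :
    GeomSum (fun n => ((n:ℝ)+1) * a (n+1)) := by
  intro r hr0 hr1
  have hr'0 : (0:ℝ) < (1+r)/2 := by linarith
  have hr'1 : (1+r)/2 < 1 := by linarith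
  have hrr' : r < (1+r)/2 := by linarith
  set r' : ℝ := (1+r)/2
  set q : ℝ := r / r' with hq
  have hq0 : 0 ≤ q := by positivity
  have hq1 : q < 1 := by rw [hq, div_lt_one hr'0]; exact hrr'
  have hr'ne : r' ≠ 0 := ne_of_gt hr'0
  clear_value r'
  clear_value q
  have hs0 : Summable (fun n => |a (n+1)| * r' ^ (n+1)) :=
    (summable_nat_add_iff 1).2 (ha r' hr'0.le hr'1)
  have hsum : Summable (fun n => (1/(1-q)) / r' * (|a (n+1)| * r' ^ (n+1))) :=
    hs0.mul_left _
  apply Summable.of_nonneg_of_le _ _ hsum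
  · intro n; positivity
  · intro n
    have key : ((n:ℝ)+1) * r ^ n ≤ (1/(1-q)) * r' ^ n := by
      have h := aux_np1_pow_le hq0 hq1 n
      have hrn : r ^ n = q ^ n * r' ^ n := by
        rw [hq, div_pow, div_mul_cancel₀]
        positivity
      rw [hrn, ← mul_assoc]
      have : (0:ℝ) ≤ r' ^ n := by positivity
      nlinarith
    have h2 : |((n:ℝ)+1) * a (n+1)| * r ^ n = |a (n+1)| * (((n:ℝ)+1) * r ^ n) := by
      rw [abs_mul, abs_of_nonneg (by positivity : (0:ℝ) ≤ (n:ℝ)+1)]; ring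
    rw [h2]
    calc |a (n+1)| * (((n:ℝ)+1) * r^n) ≤ |a (n+1)| * ((1/(1-q)) * r' ^ n) :=
          mul_le_mul_of_nonneg_left key (abs_nonneg _)
      _ = 1/(1-q) / r' * (|a (n+1)| * r' ^ (n+1)) := by
          have h1q : (1:ℝ) - q ≠ 0 := by linarith
          rw [pow_succ, div_div]
          field_simp

lemma GeomSum.summable {a : ℕ → ℝ} (ha : GeomSum a) {z : ℝ} (hz : |z| < 1) :
    Summable (fun n => a n * z ^ n) := by
  apply Summable.of_norm
  have := ha |z| (abs_nonneg z) hz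
  simpa [abs_mul, abs_pow] using this




lemma GeomSum.hasDerivAt {a : ℕ → ℝ} (ha : GeomSum a) {z : ℝ} (hz : |z| < 1) :
    HasDerivAt (fun x => ∑' n, a n * x ^ n)
      (∑' (n : ℕ), ((n:ℝ)+1) * a (n+1) * z ^ n) z := by
  have hz1 : |z| < (1 + |z|)/2 := by
    have := abs_nonneg z; linarith
  have hr1 : (1 + |z|)/2 < 1 := by
    have := hz; linarith
  have hr0 : (0:ℝ) < (1 + |z|)/2 := by
    have := abs_nonneg z; linarith
  set r : ℝ := (1 + |z|)/2 with hrdef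
  -- the summable bound on derivatives
  have hu : Summable (fun n : ℕ => (n:ℝ) * |a n| * r ^ (n-1)) := by
    rw [← summable_nat_add_iff 1]
    have := (ha.shift) r hr0.le hr1
    apply this.congr
    intro n
    simp only [Nat.add_sub_cancel]
    rw [abs_mul, abs_of_nonneg (by positivity : (0:ℝ) ≤ (n:ℝ)+1)]
    push_cast; ring
  have key : HasDerivAt (fun x => ∑' n, a n * x ^ n)
      (∑' n, a n * ((n:ℝ) * z ^ (n-1))) z := by
    apply hasDerivAt_tsum_of_isPreconnected hu (Metric.isOpen_ball)
      (Convex.isPreconnected (convex_ball (0:ℝ) r))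
      (g := fun (n:ℕ) (x:ℝ) => a n * x ^ n)
      (g' := fun (n:ℕ) (x:ℝ) => a n * ((n:ℝ) * x ^ (n-1)))
      (y₀ := z) (y := z)
    · intro n y _
      exact (hasDerivAt_pow n y).const_mul (a n)
    · intro n y hy
      simp only [Metric.mem_ball, dist_zero_right, Real.norm_eq_abs] at hy
      rw [Real.norm_eq_abs, abs_mul, abs_mul]
      rw [abs_of_nonneg (by positivity : (0:ℝ) ≤ ((n:ℝ))), abs_pow]
      calc |a n| * ((n:ℝ) * |y| ^ (n-1)) ≤ |a n| * ((n:ℝ) * r ^ (n-1)) := by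
            apply mul_le_mul_of_nonneg_left _ (abs_nonneg _)
            apply mul_le_mul_of_nonneg_left _ (Nat.cast_nonneg n)
            exact pow_le_pow_left₀ (abs_nonneg y) hy.le _
        _ = (n:ℝ) * |a n| * r ^ (n-1) := by ring
    · simp only [Metric.mem_ball, dist_zero_right, Real.norm_eq_abs]; exact hz1
    · exact ha.summable hz
    · simp only [Metric.mem_ball, dist_zero_right, Real.norm_eq_abs]; exact hz1
  convert key using 1
  -- rewrite the tsum
  have hsum' : Summable (fun n : ℕ => a n * ((n:ℝ) * z ^ (n-1))) := by
    apply Summable.of_norm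
    apply Summable.of_nonneg_of_le (fun n => norm_nonneg _) _ hu
    intro n
    rw [Real.norm_eq_abs, abs_mul, abs_mul, abs_pow,
      abs_of_nonneg (Nat.cast_nonneg n : (0:ℝ) ≤ (n:ℝ))]
    have : |z| ^ (n-1) ≤ r ^ (n-1) := pow_le_pow_left₀ (abs_nonneg z) hz1.le _
    have h0 : (0:ℝ) ≤ (n:ℝ) * |a n| := by positivity
    calc |a n| * ((n:ℝ) * |z|^(n-1)) = (n:ℝ) * |a n| * |z|^(n-1) := by ring
      _ ≤ (n:ℝ) * |a n| * r^(n-1) := by nlinarith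
  rw [hsum'.tsum_eq_zero_add]
  simp only [Nat.cast_zero, zero_mul, mul_zero, zero_add]
  apply tsum_congr
  intro n
  simp only [Nat.add_sub_cancel]
  push_cast; ring




/-- series of derivative coefficients -/
noncomputable def dd (a : ℕ → ℝ) (n : ℕ) : ℝ := ((n:ℝ)+1) * a (n+1)

lemma GeomSum.dd {a : ℕ → ℝ} (ha : GeomSum a) : GeomSum (dd a) := ha.shift

lemma series_ode {a b c₀ : ℝ} {co : ℕ → ℝ} (hco : GeomSum co)
    (hrec : ∀ n : ℕ, ((n:ℝ)+1) * ((n:ℝ) + c₀) * co (n+1) = ((n:ℝ)+a) * ((n:ℝ)+b) * co n)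
    {x : ℝ} (hx : |x| < 1) :
    x*(1-x) * (∑' (n:ℕ), dd (dd co) n * x^n) + (c₀ - (a+b+1)*x) * (∑' (n:ℕ), dd co n * x^n)
      - a*b*(∑' (n:ℕ), co n * x^n) = 0 := by
  set co1 := dd co with hco1
  set co2 := dd co1 with hco2
  set F0 := ∑' (n:ℕ), co n * x^n with hF0
  set F1 := ∑' (n:ℕ), co1 n * x^n with hF1
  set F2 := ∑' (n:ℕ), co2 n * x^n with hF2
  have H0 : HasSum (fun n => co n * x^n) F0 := (hco.summable hx).hasSum
  have H1 : HasSum (fun n => co1 n * x^n) F1 := ((hco.dd).summable hx).hasSum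
  have H2 : HasSum (fun n => co2 n * x^n) F2 := ((hco.dd.dd).summable hx).hasSum
  -- S1 : aligned form of x * F2
  have S1 : HasSum (fun m : ℕ => (m:ℝ) * co1 m * x^m) (F2 * x) := by
    have h := H2.mul_right x
    have heq : (fun n : ℕ => (co2 n * x^n) * x)
        = (fun n : ℕ => ((n:ℕ)+1 : ℝ) * co1 ((n:ℕ)+1) * x^((n:ℕ)+1)) := by
      funext n
      rw [hco2]; unfold dd
      push_cast; ring
    rw [heq] at h
    have h' : HasSum (fun n : ℕ => (fun m : ℕ => (m:ℝ) * co1 m * x^m) (n+1)) (F2*x) :=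
      h.congr (by intro n; push_cast; ring)
    have h2 := (hasSum_nat_add_iff (f := fun m : ℕ => (m:ℝ) * co1 m * x^m) 1).mp h'
    simpa using h2
  -- A series
  have SA : HasSum (fun n : ℕ => (n:ℝ)*co1 n*x^n + c₀*(co1 n*x^n) - a*b*(co n*x^n))
      (F2*x + c₀*F1 - a*b*F0) := (S1.add (H1.mul_left c₀)).sub (H0.mul_left (a*b))
  set A : ℕ → ℝ := fun n => (n:ℝ)*co1 n*x^n + c₀*(co1 n*x^n) - a*b*(co n*x^n) with hA
  have hA0 : A 0 = 0 := by
    have h := hrec 0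
    simp only [hA, hco1]; unfold dd
    push_cast at h ⊢
    nlinarith [h]
  have SA' : HasSum (fun n : ℕ => A (n+1)) (F2*x + c₀*F1 - a*b*F0) := by
    apply (hasSum_nat_add_iff (f := A) 1).2
    simp only [Finset.range_one, Finset.sum_singleton, hA0, add_zero]
    exact SA
  -- B series
  have SB : HasSum (fun n : ℕ => -(((n:ℝ)*co1 n*x^n)*x) - (a+b+1)*((co1 n * x^n)*x))
      (-(F2*x*x) - (a+b+1)*(F1*x)) := (S1.mul_right x).neg.sub ((H1.mul_right x).mul_left (a+b+1))
  have SC : HasSum (fun n : ℕ => A (n+1) + (-(((n:ℝ)*co1 n*x^n)*x) - (a+b+1)*((co1 n * x^n)*x)))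
      ((F2*x + c₀*F1 - a*b*F0) + (-(F2*x*x) - (a+b+1)*(F1*x))) := SA'.add SB
  have hzero : (fun n : ℕ => A (n+1) + (-(((n:ℝ)*co1 n*x^n)*x) - (a+b+1)*((co1 n * x^n)*x)))
      = (fun _ : ℕ => (0:ℝ)) := by
    funext n
    have h := hrec (n+1)
    simp only [hA, hco1]; unfold dd
    push_cast at h ⊢
    linear_combination x^(n+1) * h
  rw [hzero] at SC
  have := SC.unique hasSum_zero
  linear_combination this

noncomputable def sq1 (x : ℝ) : ℝ := Real.sqrt (1 - x)
noncomputable def gg (x : ℝ) : ℝ := (1 + sq1 x)/2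
noncomputable def kk (α : ℝ) : ℝ := (2*α+1)/(2*α+2)
noncomputable def ee (α : ℝ) : ℝ := -(2*α+1)
noncomputable def AA (α : ℝ) : ℝ := -(ee α)*(1-kk α) - kk α
noncomputable def BB (α : ℝ) : ℝ := -(ee α+1)*(kk α)
noncomputable def uu (α x : ℝ) : ℝ := gg x ^ ee α * (1 - kk α * (1 - sq1 x))
noncomputable def uu1 (α x : ℝ) : ℝ := gg x ^ (ee α-1) * (AA α + BB α * sq1 x)/(4 * sq1 x)
noncomputable def uu2 (α x : ℝ) : ℝ :=
  -(ee α-1) * gg x ^ (ee α-2) * (AA α + BB α * sq1 x)/(16 * (sq1 x)^2)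
    + gg x ^ (ee α-1) * (AA α)/(8 * (sq1 x)^3)

lemma sq1_pos {x : ℝ} (hx : x < 1) : 0 < sq1 x := Real.sqrt_pos.2 (by linarith)
lemma gg_pos {x : ℝ} (hx : x < 1) : 0 < gg x := by
  have := sq1_pos hx; unfold gg; linarith
lemma sq1_sq {x : ℝ} (hx : x < 1) : sq1 x ^ 2 = 1 - x := Real.sq_sqrt (by linarith)

lemma hasDerivAt_sq1 {x : ℝ} (hx : x < 1) :
    HasDerivAt sq1 (-(1/(2 * sq1 x))) x := by
  have h1 : HasDerivAt (fun y : ℝ => 1 - y) (-1) x := by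
    simpa using (hasDerivAt_id x).const_sub 1
  have h2 := (Real.hasDerivAt_sqrt (by linarith : (1:ℝ) - x ≠ 0)).comp x h1
  refine h2.congr_deriv ?_
  unfold sq1; field_simp

lemma hasDerivAt_gg {x : ℝ} (hx : x < 1) :
    HasDerivAt gg (-(1/(4 * sq1 x))) x := by
  have h := ((hasDerivAt_sq1 hx).const_add 1).div_const 2
  refine h.congr_deriv ?_
  have := sq1_pos hx
  field_simp
  ring

lemma hasDerivAt_gg_rpow {x : ℝ} (hx : x < 1) (p : ℝ) :
    HasDerivAt (fun y => gg y ^ p) (p * gg x ^ (p-1) * (-(1/(4 * sq1 x)))) x := by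
  have h := (Real.hasDerivAt_rpow_const (p := p) (Or.inl (ne_of_gt (gg_pos hx)))).comp
    x (hasDerivAt_gg hx)
  exact h

lemma rpow_shift {x : ℝ} (hx : x < 1) (p : ℝ) : gg x ^ (p + 1) = gg x ^ p * gg x :=
  Real.rpow_add_one (ne_of_gt (gg_pos hx)) p

lemma hasDerivAt_uu {α x : ℝ} (hα : 0 < α) (hx : x < 1) :
    HasDerivAt (uu α) (uu1 α x) x := by
  have hs := sq1_pos hx
  have hg := gg_pos hx
  have hq : HasDerivAt (fun y => 1 - kk α * (1 - sq1 y))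
      (-(kk α * -(-(1/(2 * sq1 x))))) x :=
    (((hasDerivAt_sq1 hx).const_sub 1).const_mul (kk α)).const_sub 1
  have h := (hasDerivAt_gg_rpow hx (ee α)).mul hq
  refine h.congr_deriv ?_
  have he : gg x ^ ee α = gg x ^ (ee α - 1) * gg x := by
    rw [← rpow_shift hx]; congr 1; ring
  rw [uu1, he]
  have hgeq : gg x = (1 + sq1 x)/2 := rfl
  have h2 : (2:ℝ)*α+2 ≠ 0 := by linarith
  rw [hgeq]
  unfold AA BB kk ee
  field_simp
  ring

lemma hasDerivAt_uu1 {α x : ℝ} (hα : 0 < α) (hx : x < 1) :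
    HasDerivAt (uu1 α) (uu2 α x) x := by
  have hs := sq1_pos hx
  have hg := gg_pos hx
  have hN : HasDerivAt (fun y => gg y ^ (ee α - 1) * (AA α + BB α * sq1 y))
      ((ee α - 1) * gg x ^ (ee α - 1 - 1) * (-(1/(4 * sq1 x))) * (AA α + BB α * sq1 x)
        + gg x ^ (ee α - 1) * (BB α * -(1/(2 * sq1 x)))) x :=
    (hasDerivAt_gg_rpow hx (ee α - 1)).mul
      (((hasDerivAt_sq1 hx).const_mul (BB α)).const_add (AA α))
  have hD : HasDerivAt (fun y => 4 * sq1 y) (4 * -(1/(2 * sq1 x))) x :=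
    (hasDerivAt_sq1 hx).const_mul 4
  have h := hN.div hD (by positivity)
  refine h.congr_deriv ?_
  have he : gg x ^ (ee α - 1) = gg x ^ (ee α - 2) * gg x := by
    rw [← rpow_shift hx]; congr 1; ring
  rw [uu2, he, show ee α - 1 - 1 = ee α - 2 by ring]
  have hgeq : gg x = (1 + sq1 x)/2 := rfl
  rw [hgeq]
  field_simp
  ring

lemma ode_uu {α x : ℝ} (hα : 0 < α) (hx : x < 1) :
    x*(1-x)*uu2 α x + ((2*α+2) - (α+(α+1/2)+1)*x)*uu1 α x - α*(α+1/2)*uu α x = 0 := by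
  have hs := sq1_pos hx
  have hg := gg_pos hx
  have hs2 := sq1_sq hx
  have he1 : gg x ^ (ee α - 1) = gg x ^ (ee α - 2) * gg x := by
    rw [← rpow_shift hx]; congr 1; ring
  have he : gg x ^ ee α = gg x ^ (ee α - 2) * gg x * gg x := by
    rw [he1.symm, ← rpow_shift hx]; congr 1; ring
  rw [uu, uu1, uu2, he, he1]
  set s := sq1 x with hsd
  set G2 := gg x ^ (ee α - 2) with hG2d
  have hgeq : gg x = (1 + s)/2 := rfl
  have hxeq : x = 1 - s ^ 2 := by rw [hsd]; linarith
  rw [hgeq]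
  unfold AA BB kk ee
  have h2 : (2:ℝ)*α+2 ≠ 0 := by linarith
  rw [hxeq]
  field_simp
  ring
-- ===== Stage 6 =====

lemma hgc_geom {α : ℝ} (hα : 0 < α) : GeomSum (hgc α) := by
  intro r hr0 hr1
  have heq : (fun n => |hgc α n| * r^n) = (fun n => hgc α n * r^n) :=
    funext fun n => by rw [abs_of_pos (hgc_pos hα n)]
  rw [heq]
  set N : ℕ := ⌈α*α⌉₊ with hN
  apply summable_of_ratio_norm_eventually_le hr1
  filter_upwards [eventually_ge_atTop N] with n hn
  have hcast : α*α ≤ (n:ℝ) := le_trans (Nat.le_ceil _) (Nat.cast_le.2 hn)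
  have hn0 : (0:ℝ) ≤ (n:ℝ) := Nat.cast_nonneg n
  have hp1 := hgc_pos hα (n+1)
  have hp0 := hgc_pos hα n
  have hD : ((n:ℝ)+α) * ((n:ℝ)+(α+1/2)) ≤ ((n:ℝ)+1) * ((n:ℝ)+(2*α+2)) := by nlinarith
  have hmono : hgc α (n+1) ≤ hgc α n := by
    have hposf : (0:ℝ) < ((n:ℝ)+1) * ((n:ℝ)+(2*α+2)) := by nlinarith
    have h2 : ((n:ℝ)+1) * ((n:ℝ)+(2*α+2)) * hgc α (n+1)
        ≤ ((n:ℝ)+1) * ((n:ℝ)+(2*α+2)) * hgc α n := by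
      rw [hgc_rec hα n]
      exact mul_le_mul_of_nonneg_right hD hp0.le
    nlinarith
  have h0r : (0:ℝ) ≤ r ^ n := by positivity
  rw [Real.norm_eq_abs, Real.norm_eq_abs,
    abs_of_nonneg (by positivity : (0:ℝ) ≤ hgc α (n+1) * r^(n+1)),
    abs_of_nonneg (by positivity : (0:ℝ) ≤ hgc α n * r^n), pow_succ]
  calc hgc α (n+1) * (r^n * r) ≤ hgc α n * (r^n * r) :=
        mul_le_mul_of_nonneg_right hmono (by positivity)
    _ = r * (hgc α n * r ^ n) := by ring

lemma uu_pos {α x : ℝ} (hα : 0 < α) (hx0 : 0 ≤ x) (hx : x < 1) : 0 < uu α x := by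
  have hs := sq1_pos hx
  have hg := gg_pos hx
  have hs1 : sq1 x ≤ 1 := by
    rw [show (1:ℝ) = Real.sqrt 1 by simp [Real.sqrt_one]]
    exact Real.sqrt_le_sqrt (by linarith)
  have hk1 : kk α < 1 := by
    rw [kk, div_lt_one (by linarith)]; linarith
  have hk0 : 0 < kk α := by
    rw [kk]; positivity
  have hq : 0 < 1 - kk α * (1 - sq1 x) := by nlinarith
  exact mul_pos (Real.rpow_pos_of_pos hg _) hq

lemma uu_zero {α : ℝ} : uu α 0 = 1 := by
  have h1 : sq1 0 = 1 := by simp [sq1]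
  rw [uu, gg, h1]
  norm_num

lemma const_from_right {F : ℝ → ℝ} {z : ℝ} (hz : 0 < z)
    (hcont : ContinuousOn F (Icc 0 z))
    (hder : ∀ y ∈ Ioo (0:ℝ) z, HasDerivAt F 0 y) :
    F z = F 0 := by
  have key : ∀ ε ∈ Ioo (0:ℝ) z, F z = F ε := by
    intro ε hε
    have hconst := constant_of_has_deriv_right_zero (f := F) (a := ε) (b := z)
      (hcont.mono (Icc_subset_Icc hε.1.le le_rfl))
      (fun y hy => (hder y ⟨lt_of_lt_of_le hε.1 hy.1, hy.2⟩).hasDerivWithinAt)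
    exact hconst z (right_mem_Icc.2 hε.2.le)
  have hne : (nhdsWithin (0:ℝ) (Ioo 0 z)).NeBot := by
    apply mem_closure_iff_nhdsWithin_neBot.mp
    rw [closure_Ioo hz.ne]
    exact left_mem_Icc.2 hz.le
  have h1 : Tendsto F (nhdsWithin 0 (Ioo 0 z)) (nhds (F 0)) := by
    have hc : ContinuousWithinAt F (Icc 0 z) 0 := hcont 0 (left_mem_Icc.2 hz.le)
    exact hc.tendsto.mono_left (nhdsWithin_mono 0 Ioo_subset_Icc_self)
  have h2 : Tendsto F (nhdsWithin 0 (Ioo 0 z)) (nhds (F z)) := by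
    have heq : F =ᶠ[nhdsWithin 0 (Ioo 0 z)] (fun _ => F z) := by
      filter_upwards [self_mem_nhdsWithin] with y hy
      exact (key y hy).symm
    exact Tendsto.congr' heq.symm tendsto_const_nhds
  exact tendsto_nhds_unique h2 h1

/-- Closed form for `₂F₁(α, α+1/2, 2α+2; z)` on `0 < z < 1`:
with `g(z) = 1/2 + (1/2)√(1-z)` and `p(z) = -(α+1/2)(1-z) + α√(1-z) + 1/2`,
`₂F₁(α, α+1/2, 2α+2; z) = (2α+1) g(z)^{-2α} p(z) / ((α+1)(α+1/2) z)`. -/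
theorem hypergeom_closed_form_once_diff (α z : ℝ) (hα : 0 < α) (hz0 : 0 < z) (hz1 : z < 1) :
    HasSum
      (fun n : ℕ =>
        poch α n * poch (α + 1/2) n / (poch (2*α + 2) n * n.factorial) * z ^ n)
      ((2*α + 1) * (1/2 + (1/2) * Real.sqrt (1 - z)) ^ (-(2*α)) *
          (-(α + 1/2) * (1 - z) + α * Real.sqrt (1 - z) + 1/2) /
        ((α + 1) * (α + 1/2) * z)) := by
  set co := hgc α with hco
  have hgeom : GeomSum co := hgc_geom hα
  have hgeom1 : GeomSum (dd co) := hgeom.shift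
  have hgeom2 : GeomSum (dd (dd co)) := hgeom1.shift
  set F0 : ℝ → ℝ := fun x => ∑' (n:ℕ), co n * x^n with hF0
  set F1 : ℝ → ℝ := fun x => ∑' (n:ℕ), dd co n * x^n with hF1
  set F2 : ℝ → ℝ := fun x => ∑' (n:ℕ), dd (dd co) n * x^n with hF2
  have hDF0 : ∀ x : ℝ, |x| < 1 → HasDerivAt F0 (F1 x) x := by
    intro x hx
    exact hgeom.hasDerivAt hx
  have hDF1 : ∀ x : ℝ, |x| < 1 → HasDerivAt F1 (F2 x) x := by
    intro x hx
    exact hgeom1.hasDerivAt hx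
  have hfode : ∀ x : ℝ, |x| < 1 →
      x*(1-x) * F2 x + ((2*α+2) - (α+(α+1/2)+1)*x) * F1 x - α*(α+1/2)*F0 x = 0 := by
    intro x hx
    exact series_ode hgeom (fun n => hgc_rec hα n) hx
  -- the Wronskian
  set W : ℝ → ℝ := fun y => F1 y * uu α y - F0 y * uu1 α y with hW
  have habs : ∀ y : ℝ, 0 ≤ y → y < 1 → |y| < 1 := fun y h1 h2 => by
    rw [abs_of_nonneg h1]; exact h2
  have hWzero : ∀ x : ℝ, 0 < x → x < 1 → W x = 0 := by
    intro x hx0 hx1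
    set V : ℝ → ℝ := fun y => W y * (y ^ ((2*α+2 : ℝ)) * (1-y) ^ ((-(1/2):ℝ))) with hV
    have hc0 : (0:ℝ) < 2*α+2 := by linarith
    have hVder : ∀ y ∈ Ioo (0:ℝ) x, HasDerivAt V 0 y := by
      intro y hy
      have hy0 : (0:ℝ) < y := hy.1
      have hy1 : y < 1 := lt_trans hy.2 hx1
      have hyabs : |y| < 1 := habs y hy0.le hy1
      have h1y : (0:ℝ) < 1 - y := by linarith
      have hWd : HasDerivAt W (F2 y * uu α y - F0 y * uu2 α y) y := by
        have h := ((hDF1 y hyabs).mul (hasDerivAt_uu hα hy1)).sub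
          ((hDF0 y hyabs).mul (hasDerivAt_uu1 hα hy1))
        refine h.congr_deriv ?_
        ring
      have hP : HasDerivAt (fun y : ℝ => y ^ ((2*α+2:ℝ))) ((2*α+2) * y ^ ((2*α+2) - 1)) y :=
        Real.hasDerivAt_rpow_const (Or.inl (ne_of_gt hy0))
      have hQ : HasDerivAt (fun y : ℝ => (1-y) ^ ((-(1/2):ℝ)))
          ((-(1/2)) * (1-y) ^ ((-(1/2):ℝ) - 1) * (-1)) y := by
        have hin : HasDerivAt (fun y : ℝ => 1 - y) (-1) y := by
          simpa using (hasDerivAt_id y).const_sub 1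
        exact (Real.hasDerivAt_rpow_const (p := (-(1/2):ℝ))
          (Or.inl (ne_of_gt h1y))).comp y hin
      have hVd := hWd.mul (hP.mul hQ)
      refine hVd.congr_deriv ?_
      symm
      -- show the derivative value is 0
      have relW : y*(1-y)*(F2 y * uu α y - F0 y * uu2 α y)
          = -((2*α+2) - (α+(α+1/2)+1)*y) * W y := by
        have h1 := hfode y hyabs
        have h2 := ode_uu hα (x := y) hy1
        rw [hW]
        linear_combination (uu α y) * h1 - (F0 y) * h2
      have hyne : y ≠ 0 := ne_of_gt hy0
      have h1yne : (1:ℝ) - y ≠ 0 := ne_of_gt h1y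
      have hp : y ^ ((2*α+2:ℝ)) = y ^ ((2*α+2:ℝ) - 1) * y := by
        rw [← Real.rpow_add_one hyne]; congr 1; ring
      have hqq : (1-y) ^ ((-(1/2):ℝ)) = (1-y) ^ ((-(1/2):ℝ) - 1) * (1-y) := by
        rw [← Real.rpow_add_one h1yne]; congr 1; ring
      simp only [Pi.mul_apply]
      rw [hp, hqq]
      set P1 := y ^ ((2*α+2:ℝ) - 1) with hP1
      set Q1 := (1-y) ^ ((-(1/2):ℝ) - 1) with hQ1
      linear_combination (-(P1 * Q1)) * relW
    have hVcont : ContinuousOn V (Icc 0 x) := by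
      intro y hy
      have hy1 : y < 1 := lt_of_le_of_lt hy.2 hx1
      have hyabs : |y| < 1 := habs y hy.1 hy1
      have h1y : (0:ℝ) < 1 - y := by linarith
      apply ContinuousWithinAt.mul
      · apply ContinuousWithinAt.sub
        · exact (((hDF1 y hyabs).continuousAt).mul
            (hasDerivAt_uu hα hy1).continuousAt).continuousWithinAt
        · exact (((hDF0 y hyabs).continuousAt).mul
            (hasDerivAt_uu1 hα hy1).continuousAt).continuousWithinAt
      · apply ContinuousWithinAt.mul
        · exact (Real.continuousAt_rpow_const y _ (Or.inr hc0.le)).continuousWithinAt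
        · have hc1 : ContinuousAt (fun w : ℝ => w ^ ((-(1/2):ℝ))) (1-y) :=
            Real.continuousAt_rpow_const _ _ (Or.inl (ne_of_gt h1y))
          exact (hc1.comp
            ((continuous_const.sub continuous_id).continuousAt)).continuousWithinAt
    have hVx := const_from_right hx0 hVcont hVder
    have hV0 : V 0 = 0 := by
      have hzr : (0:ℝ) ^ ((2*α+2:ℝ)) = 0 := Real.zero_rpow (by linarith)
      simp [hV, hzr]
    rw [hV0] at hVx
    have hx1y : (0:ℝ) < 1 - x := by linarith
    have hppos : (0:ℝ) < x ^ ((2*α+2:ℝ)) := Real.rpow_pos_of_pos hx0 _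
    have hqpos : (0:ℝ) < (1-x) ^ ((-(1/2):ℝ)) := Real.rpow_pos_of_pos hx1y _
    have hprod : (0:ℝ) < x ^ ((2*α+2:ℝ)) * (1-x) ^ ((-(1/2):ℝ)) := mul_pos hppos hqpos
    have hVxval : W x * (x ^ ((2*α+2:ℝ)) * (1-x) ^ ((-(1/2):ℝ))) = 0 := hVx
    rcases mul_eq_zero.mp hVxval with h | h
    · exact h
    · exact absurd h (ne_of_gt hprod)
  -- ratio argument
  have hF0z : F0 z = uu α z := by
    set R : ℝ → ℝ := fun y => F0 y / uu α y with hR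
    have hRz : R z = R 0 := by
      apply const_from_right hz0
      · intro y hy
        have hy1 : y < 1 := lt_of_le_of_lt hy.2 hz1
        have hyabs : |y| < 1 := habs y hy.1 hy1
        have hune : uu α y ≠ 0 := ne_of_gt (uu_pos hα hy.1 hy1)
        exact ((hDF0 y hyabs).continuousAt.div (hasDerivAt_uu hα hy1).continuousAt
          hune).continuousWithinAt
      · intro y hy
        have hy1 : y < 1 := lt_trans hy.2 hz1
        have hyabs : |y| < 1 := habs y hy.1.le hy1
        have hune : uu α y ≠ 0 := ne_of_gt (uu_pos hα hy.1.le hy1)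
        have hd := (hDF0 y hyabs).div (hasDerivAt_uu hα hy1) hune
        have hval : (F1 y * uu α y - F0 y * uu1 α y) / uu α y ^ 2 = 0 := by
          rw [show F1 y * uu α y - F0 y * uu1 α y = W y from rfl,
            hWzero y hy.1 hy1, zero_div]
        rw [← hval]
        exact hd
    have hF00 : F0 0 = 1 := by
      have h1 : F0 0 = ∑' (n:ℕ), co n * (0:ℝ)^n := rfl
      rw [h1, tsum_eq_single 0 (fun b hb => by simp [zero_pow hb])]
      simp [hco, hgc_zero]
    have huz : uu α z ≠ 0 := ne_of_gt (uu_pos hα hz0.le hz1)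
    have hRatio : F0 z / uu α z = F0 0 / uu α 0 := hRz
    rw [hF00, uu_zero] at hRatio
    rw [div_eq_div_iff huz (by norm_num : (1:ℝ) ≠ 0)] at hRatio
    linarith [hRatio]
  -- final translation
  have hsummable : Summable (fun n : ℕ => co n * z^n) :=
    hgeom.summable (habs z hz0.le hz1)
  have hhs : HasSum (fun n : ℕ => co n * z^n) (F0 z) := hsummable.hasSum
  rw [hF0z] at hhs
  have hRHSeq : uu α z =
      ((2*α + 1) * (1/2 + (1/2) * Real.sqrt (1 - z)) ^ (-(2*α)) *
          (-(α + 1/2) * (1 - z) + α * Real.sqrt (1 - z) + 1/2) /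
        ((α + 1) * (α + 1/2) * z)) := by
    have hs := sq1_pos hz1
    have hg := gg_pos hz1
    have hs2 := sq1_sq hz1
    have hbase : (1/2 + (1/2) * Real.sqrt (1 - z)) = gg z := by
      rw [gg, sq1]; ring
    rw [hbase]
    have hexp : gg z ^ (-(2*α)) = gg z ^ (ee α) * gg z := by
      rw [← Real.rpow_add_one (ne_of_gt hg)]; congr 1; rw [ee]; ring
    rw [hexp, uu]
    have hsq : Real.sqrt (1 - z) = sq1 z := rfl
    rw [hsq]
    have hgeq : gg z = (1 + sq1 z)/2 := rfl
    set s := sq1 z with hsd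
    set G := gg z ^ (ee α) with hGd
    have hzeq : z = 1 - s^2 := by rw [hsd]; linarith
    rw [hgeq, kk]
    rw [hzeq]
    have h1 : (2:ℝ)*α+2 ≠ 0 := by linarith
    have h2 : (α:ℝ)+1 ≠ 0 := by linarith
    have h3 : (α:ℝ)+1/2 ≠ 0 := by linarith
    have h4 : (1:ℝ) - s^2 ≠ 0 := by rw [← hzeq]; exact ne_of_gt hz0
    field_simp
    ring
  rw [← hRHSeq]
  exact hhs
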